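/- If an orientation of V8 contains a directed cycle of length 8 (a directed Hamiltonian cycle), then it also contains a directed cycle of length 5. -/
import Mathlib


/-- Adjacency in `V₈`, the four-rung Möbius ladder: `j` is adjacent to `j - 1`,
`j + 1` and `j + 4` (mod 8). -/
def V8Adj (i j : ZMod 8) : Prop := j = i + 1 ∨ i = j + 1 ∨ j = i + 4

/-- `E` is an orientation of `V₈`: for every pair of adjacent vertices exactly one
of the two arcs between them is present, and there are no arcs between non-adjacent
vertices. -/
def IsV8Orientation (E : ZMod 8 → ZMod 8 → Prop) : Prop :=
  (∀ i j, E i j → V8Adj i j) ∧ ∀ i j, V8Adj i j → (E i j ↔ ¬ E j i)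

/-- A directed cycle of length `k` in the digraph `E`. -/
def IsDirCycle {V : Type*} (E : V → V → Prop) (k : ℕ) (f : ZMod k → V) : Prop :=
  3 ≤ k ∧ Function.Injective f ∧ ∀ t : ZMod k, E (f t) (f (t + 1))

/-- The cycle `f` is induced: the only arcs between vertices of the cycle are the
consecutive arcs `f t → f (t+1)`. -/
def IsInducedDirCycle {V : Type*} (E : V → V → Prop) (k : ℕ) (f : ZMod k → V) : Prop :=
  ∀ s t : ZMod k, E (f s) (f t) → t = s + 1

/-- The cycle `f` is undominated: no vertex `u` outside the cycle has arcs to two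
distinct vertices of the cycle. -/
def IsUndominatedDirCycle {V : Type*} (E : V → V → Prop) (k : ℕ) (f : ZMod k → V) : Prop :=
  ∀ u : V, u ∉ Set.range f → ¬ ∃ s t : ZMod k, f s ≠ f t ∧ E u (f s) ∧ E u (f t)

/-- If an orientation of `V₈` contains a directed cycle of length 8 (a directed
Hamiltonian cycle), then it also contains a directed cycle of length 5. -/
instance : ∀ i j, Decidable (V8Adj i j) := fun i j => by unfold V8Adj; infer_instance

def vstep : Fin 3 → ZMod 8 := ![1, 7, 4]

def Psum (e : ZMod 8 → Fin 3) : ℕ → ZMod 8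
  | 0 => 0
  | n + 1 => Psum e n + vstep (e (n : ZMod 8))

def Fsum (e : ZMod 8 → Fin 3) (t : ZMod 8) : ZMod 8 := Psum e t.val

set_option maxRecDepth 20000 in
set_option maxHeartbeats 4000000 in
lemma key : ∀ a b c d p q r w : Fin 3, (fun e : ZMod 8 → Fin 3 =>
    Psum e 8 = 0 →
    Function.Injective (Fsum e) →
    ∃ s : ZMod 8, V8Adj (Fsum e s) (Fsum e (s + 4))) ![a,b,c,d,p,q,r,w] := by decide

lemma key' (e : ZMod 8 → Fin 3) (h0 : Psum e 8 = 0)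
    (hinj : Function.Injective (Fsum e)) :
    ∃ s : ZMod 8, V8Adj (Fsum e s) (Fsum e (s + 4)) := by
  have h := key (e 0) (e 1) (e 2) (e 3) (e 4) (e 5) (e 6) (e 7)
  have he : ![e 0, e 1, e 2, e 3, e 4, e 5, e 6, e 7] = e := by
    funext t; fin_cases t <;> rfl
  rw [he] at h
  exact h h0 hinj

lemma V8Adj_sub {i j c : ZMod 8} (h : V8Adj i j) : V8Adj (i - c) (j - c) := by
  rcases h with h | h | h
  · exact Or.inl (by rw [h]; ring)
  · exact Or.inr (Or.inl (by rw [h]; ring))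
  · exact Or.inr (Or.inr (by rw [h]; ring))

lemma V8Adj_of_sub {i j c : ZMod 8} (h : V8Adj (i - c) (j - c)) : V8Adj i j := by
  have := V8Adj_sub (c := -c) h
  simpa [sub_neg_eq_add, sub_add_cancel] using this

def chi1 : ZMod 5 → ZMod 8 := ![0, 4, 5, 6, 7]
def chi2 : ZMod 5 → ZMod 8 := ![4, 0, 1, 2, 3]

lemma chi1_inj : Function.Injective chi1 := by decide
lemma chi2_inj : Function.Injective chi2 := by decide

theorem v8_eight_cycle_gives_five_cycle
    (E : ZMod 8 → ZMod 8 → Prop) (hE : IsV8Orientation E)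
    (f : ZMod 8 → ZMod 8) (hf : IsDirCycle E 8 f) :
    ∃ g : ZMod 5 → ZMod 8, IsDirCycle E 5 g := by
  obtain ⟨-, hinj, hstep⟩ := hf
  have hadj : ∀ t, V8Adj (f t) (f (t + 1)) := fun t => hE.1 _ _ (hstep t)
  set f' : ZMod 8 → ZMod 8 := fun t => f t - f 0 with hf'
  have hinj' : Function.Injective f' := fun a b h => hinj (by simpa [hf', sub_left_inj] using h)
  have hdiff : ∀ t, f' (t + 1) - f' t = 1 ∨ f' (t + 1) - f' t = 7 ∨ f' (t + 1) - f' t = 4 := by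
    intro t
    have hd : f' (t + 1) - f' t = f (t + 1) - f t := by simp only [hf']; ring
    have h1 : ∀ x : ZMod 8, (x + 1) - x = 1 := fun x => by ring
    have h7 : ∀ x : ZMod 8, x - (x + 1) = 7 := by decide
    have h4 : ∀ x : ZMod 8, (x + 4) - x = 4 := fun x => by ring
    rcases hadj t with h | h | h
    · left; rw [hd, h]; exact h1 _
    · right; left; rw [hd, h]; exact h7 _
    · right; right; rw [hd, h]; exact h4 _
  set e : ZMod 8 → Fin 3 := fun t =>
    if f' (t + 1) - f' t = 1 then 0 else if f' (t + 1) - f' t = 7 then 1 else 2 with he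
  have hve : ∀ t, vstep (e t) = f' (t + 1) - f' t := by
    intro t
    rcases hdiff t with h | h | h <;> simp only [he, h, vstep] <;> decide
  have hP : ∀ n : ℕ, Psum e n = f' (n : ZMod 8) := by
    intro n
    induction n with
    | zero => simp [Psum, hf']
    | succ n ih =>
      show Psum e n + vstep (e (n : ZMod 8)) = _
      rw [ih, hve]
      push_cast
      ring
  have h0 : Psum e 8 = 0 := by
    rw [hP 8]
    have : ((8 : ℕ) : ZMod 8) = 0 := by decide
    rw [this]
    simp [hf']
  have hFe : Fsum e = f' := by
    funext t
    have hv : ((t.val : ℕ) : ZMod 8) = t := by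
      have : ∀ u : ZMod 8, ((u.val : ℕ) : ZMod 8) = u := by decide
      exact this t
    show Psum e t.val = f' t
    rw [hP t.val, hv]
  obtain ⟨s, hch'⟩ := key' e h0 (hFe ▸ hinj')
  rw [hFe] at hch'
  have hch : V8Adj (f s) (f (s + 4)) := V8Adj_of_sub hch'
  have hiff := hE.2 _ _ hch
  have hcase : ∀ u : ZMod 5, u = 0 ∨ u = 1 ∨ u = 2 ∨ u = 3 ∨ u = 4 := by decide
  have hstep' : ∀ a b : ZMod 8, b = a + 1 → E (f (s + a)) (f (s + b)) := by
    intro a b h; rw [h, ← add_assoc]; exact hstep (s + a)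
  by_cases hdir : E (f s) (f (s + 4))
  · refine ⟨fun t => f (s + chi1 t), by norm_num,
      fun a b h => chi1_inj (add_left_cancel (hinj h)), ?_⟩
    intro t
    rcases hcase t with rfl | rfl | rfl | rfl | rfl
    · show E (f (s + chi1 0)) (f (s + chi1 (0 + 1)))
      rw [show chi1 0 = 0 from rfl, show chi1 (0 + 1) = 4 from rfl, add_zero]
      exact hdir
    · exact hstep' (chi1 1) (chi1 (1 + 1)) (by decide)
    · exact hstep' (chi1 2) (chi1 (2 + 1)) (by decide)
    · exact hstep' (chi1 3) (chi1 (3 + 1)) (by decide)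
    · exact hstep' (chi1 4) (chi1 (4 + 1)) (by decide)
  · have hrev : E (f (s + 4)) (f s) := by
      by_contra hr; exact hdir (hiff.mpr hr)
    refine ⟨fun t => f (s + chi2 t), by norm_num,
      fun a b h => chi2_inj (add_left_cancel (hinj h)), ?_⟩
    intro t
    rcases hcase t with rfl | rfl | rfl | rfl | rfl
    · show E (f (s + chi2 0)) (f (s + chi2 (0 + 1)))
      rw [show chi2 0 = 4 from rfl, show chi2 (0 + 1) = 0 from rfl, add_zero]
      exact hrev
    · exact hstep' (chi2 1) (chi2 (1 + 1)) (by decide)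
    · exact hstep' (chi2 2) (chi2 (2 + 1)) (by decide)
    · exact hstep' (chi2 3) (chi2 (3 + 1)) (by decide)
    · exact hstep' (chi2 4) (chi2 (4 + 1)) (by decide)
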